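/- Let η ∈ (0,1), let 0 < τ̂ ≤ τ̄, and let K ≥ 1 be an integer. Write log_{1/η}(x) = ln(x)/ln(1/η) and φ = (1 + √5)/2. Set τ_{-1} = τ̄ and let τ_0, …, τ_{K-1} and τ°_0, …, τ°_{K-1} be positive real numbers such that τ°_0 ≤ τ̄, τ°_k ≤ τ_{k-1}·√(1 + τ_{k-1}/τ_{k-2}) for every 1 ≤ k ≤ K-1 (with the convention τ_{-1} = τ̄), and τ̂ ≤ τ_k ≤ τ°_k for every 0 ≤ k ≤ K-1. Then Σ_{k=0}^{K-1} ( 1 + log_{1/η}(τ°_k/τ_k) ) ≤ (1 + log_{1/η}(φ))·K + log_{1/η}(τ̄/τ̂). -/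
import Mathlib


/-- Total number of backtracking-condition evaluations over `K` iterations of
the non-monotone step-size search.  With `η ∈ (0,1)`, `0 < τ̂ ≤ τ̄`, `K ≥ 1`,
`τ₋₁ = τ̄`, initial trial step sizes `τ°ₖ` satisfying `τ°₀ ≤ τ̄` and
`τ°ₖ ≤ τ_{k-1}·√(1 + τ_{k-1}/τ_{k-2})` for `1 ≤ k ≤ K-1` (convention `τ₋₁ = τ̄`),
and accepted step sizes `τₖ` with `τ̂ ≤ τₖ ≤ τ°ₖ`, one has
`Σ_{k=0}^{K-1} (1 + log_{1/η}(τ°ₖ/τₖ)) ≤ (1 + log_{1/η} φ)·K + log_{1/η}(τ̄/τ̂)`,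
where `φ = (1+√5)/2` and `log_{1/η} x = ln x / ln (1/η)`. -/
theorem stmt_8 (η : ℝ) (hη0 : 0 < η) (hη1 : η < 1)
    (τhat τbar : ℝ) (hτhat : 0 < τhat) (hτhb : τhat ≤ τbar)
    (K : ℕ) (hK : 1 ≤ K)
    (τ τo : ℕ → ℝ)
    (hpos : ∀ k ≤ K - 1, 0 < τ k ∧ 0 < τo k)
    (hτo0 : τo 0 ≤ τbar)
    (hτok : ∀ k : ℕ, 1 ≤ k → k ≤ K - 1 →
      τo k ≤ τ (k - 1) * Real.sqrt (1 + τ (k - 1) / (if k = 1 then τbar else τ (k - 2))))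
    (hbound : ∀ k ≤ K - 1, τhat ≤ τ k ∧ τ k ≤ τo k) :
    ∑ k ∈ Finset.range K, (1 + Real.log (τo k / τ k) / Real.log (1 / η)) ≤
      (1 + Real.log ((1 + Real.sqrt 5) / 2) / Real.log (1 / η)) * K +
        Real.log (τbar / τhat) / Real.log (1 / η) := by
  set φ : ℝ := (1 + Real.sqrt 5) / 2 with hφdef
  have hs5 : 1 ≤ Real.sqrt 5 := by
    rw [show (1:ℝ) = Real.sqrt 1 by simp]
    exact Real.sqrt_le_sqrt (by norm_num)
  have hφ1 : 1 ≤ φ := by rw [hφdef]; linarith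
  have hφ0 : (0:ℝ) < φ := lt_of_lt_of_le one_pos hφ1
  have hφsq : Real.sqrt (1 + φ) = φ := by
    have h5 : Real.sqrt 5 ^ 2 = 5 := Real.sq_sqrt (by norm_num)
    have : 1 + φ = φ ^ 2 := by rw [hφdef]; nlinarith [h5]
    rw [this, Real.sqrt_sq hφ0.le]
  have hlogφ : 0 ≤ Real.log φ := Real.log_nonneg hφ1
  have hτbar : 0 < τbar := lt_of_lt_of_le hτhat hτhb
  set s : ℕ → ℝ := fun k => if k = 0 then τbar else τ (k - 1) with hs
  have hspos : ∀ k, k ≤ K - 1 → 0 < s k := by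
    intro k hk
    match k with
    | 0 => simpa [hs] using hτbar
    | (m+1) =>
      simp only [hs]
      exact (hpos m (le_trans (Nat.le_succ m) hk)).1
  -- ratios stay below φ
  have hratio : ∀ k, k ≤ K - 1 → τ k ≤ φ * s k := by
    intro k
    induction k with
    | zero =>
      intro hk
      simp only [hs, if_pos rfl]
      calc τ 0 ≤ τo 0 := (hbound 0 hk).2
        _ ≤ τbar := hτo0
        _ ≤ φ * τbar := le_mul_of_one_le_left hτbar.le hφ1
    | succ n ih =>
      intro hk
      have hn : n ≤ K - 1 := le_trans (Nat.le_succ n) hk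
      have hsn : 0 < s n := hspos n hn
      have hτn : 0 < τ n := (hpos n hn).1
      have hD : (if n + 1 = 1 then τbar else τ (n + 1 - 2)) = s n := by
        match n with
        | 0 => simp [hs]
        | (m+1) => simp [hs]
      have h1 : τo (n+1) ≤ τ n * Real.sqrt (1 + τ n / s n) := by
        have := hτok (n+1) (Nat.le_add_left 1 n) hk
        simpa [hD] using this
      have h2 : τ n / s n ≤ φ := (div_le_iff₀ hsn).2 (by
        have := ih hn
        nlinarith)
      have h3 : Real.sqrt (1 + τ n / s n) ≤ φ := by
        rw [← hφsq]
        exact Real.sqrt_le_sqrt (by linarith)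
      have : τ (n+1) ≤ τ n * φ :=
        le_trans (hbound (n+1) hk).2 (le_trans h1 (by nlinarith [Real.sqrt_nonneg (1 + τ n / s n)]))
      have hsn1 : s (n+1) = τ n := by simp [hs]
      rw [hsn1]; linarith
  -- pointwise log bound
  have hpoint : ∀ k, k ≤ K - 1 →
      Real.log (τo k / τ k) ≤ Real.log φ + (Real.log (s k) - Real.log (τ k)) := by
    intro k hk
    have hτk : 0 < τ k := (hpos k hk).1
    have hτok' : 0 < τo k := (hpos k hk).2
    have hsk : 0 < s k := hspos k hk
    have hup : τo k ≤ φ * s k := by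
      match k with
      | 0 =>
        simp only [hs, if_pos rfl]
        exact le_trans hτo0 (le_mul_of_one_le_left hτbar.le hφ1)
      | (m+1) =>
        have hm : m ≤ K - 1 := le_trans (Nat.le_succ m) hk
        have hτm : 0 < τ m := (hpos m hm).1
        have hsm : 0 < s m := hspos m hm
        have hD : (if m + 1 = 1 then τbar else τ (m + 1 - 2)) = s m := by
          match m with
          | 0 => simp [hs]
          | (j+1) => simp [hs]
        have h1 : τo (m+1) ≤ τ m * Real.sqrt (1 + τ m / s m) := by
          have := hτok (m+1) (Nat.le_add_left 1 m) hk
          simpa [hD] using this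
        have h2 : τ m / s m ≤ φ := (div_le_iff₀ hsm).2 (by
          have := hratio m hm; nlinarith)
        have h3 : Real.sqrt (1 + τ m / s m) ≤ φ := by
          rw [← hφsq]
          exact Real.sqrt_le_sqrt (by linarith)
        have hsm1 : s (m+1) = τ m := by simp [hs]
        rw [hsm1, mul_comm]
        exact le_trans h1 (by nlinarith [Real.sqrt_nonneg (1 + τ m / s m)])
    rw [Real.log_div hτok'.ne' hτk.ne']
    have : Real.log (τo k) ≤ Real.log (φ * s k) := Real.log_le_log hτok' hup
    rw [Real.log_mul hφ0.ne' hsk.ne'] at this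
    linarith
  -- sum of logs
  have hsum : ∑ k ∈ Finset.range K, Real.log (τo k / τ k) ≤
      Real.log φ * K + Real.log (τbar / τhat) := by
    have htel : ∑ k ∈ Finset.range K, (Real.log (s k) - Real.log (s (k+1))) =
        Real.log (s 0) - Real.log (s K) := Finset.sum_range_sub' (fun k => Real.log (s k)) K
    have hstep : ∑ k ∈ Finset.range K, Real.log (τo k / τ k) ≤
        ∑ k ∈ Finset.range K, (Real.log φ + (Real.log (s k) - Real.log (s (k+1)))) := by
      apply Finset.sum_le_sum
      intro k hkmem
      have hk : k ≤ K - 1 := by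
        have := Finset.mem_range.1 hkmem; omega
      have hsk1 : s (k+1) = τ k := by simp [hs]
      rw [hsk1]
      exact hpoint k hk
    rw [Finset.sum_add_distrib, Finset.sum_const, Finset.card_range, htel] at hstep
    have hs0 : s 0 = τbar := by simp [hs]
    have hsK : s K = τ (K-1) := by
      have : K ≠ 0 := by omega
      simp [hs, this]
    have hτK1 : τhat ≤ τ (K-1) := (hbound (K-1) le_rfl).1
    have hτK1p : 0 < τ (K-1) := (hpos (K-1) le_rfl).1
    have hloghat : Real.log τhat ≤ Real.log (τ (K-1)) := Real.log_le_log hτhat hτK1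
    rw [Real.log_div hτbar.ne' hτhat.ne']
    rw [hs0, hsK] at hstep
    calc ∑ k ∈ Finset.range K, Real.log (τo k / τ k)
        ≤ K • Real.log φ + (Real.log τbar - Real.log (τ (K-1))) := hstep
      _ ≤ Real.log φ * K + (Real.log τbar - Real.log τhat) := by
          rw [nsmul_eq_mul, mul_comm]; linarith
  -- divide by L = log(1/η) > 0
  have hL : 0 < Real.log (1/η) := Real.log_pos (by
    rw [lt_div_iff₀ hη0]; linarith)
  set L := Real.log (1/η) with hLdef
  have hdiv : (∑ k ∈ Finset.range K, Real.log (τo k / τ k)) / L ≤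
      (Real.log φ * K + Real.log (τbar / τhat)) / L :=
    (div_le_div_iff_of_pos_right hL).2 hsum
  have hrw : ∑ k ∈ Finset.range K, (1 + Real.log (τo k / τ k) / L) =
      K + (∑ k ∈ Finset.range K, Real.log (τo k / τ k)) / L := by
    rw [Finset.sum_add_distrib, Finset.sum_const, Finset.card_range, ← Finset.sum_div]
    simp
  rw [hrw]
  have : (1 + Real.log φ / L) * K + Real.log (τbar / τhat) / L =
      K + (Real.log φ * K + Real.log (τbar / τhat)) / L := by
    field_simp; ring
  rw [this]
  linarith
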